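/- If H²(G/N, N) = 1 (with the conjugation action), then every θ ∈ Aut(N) commuting with the G/N-action on N extends to an automorphism of G inducing the identity on G/N, and every φ ∈ Aut(G/N) preserving the action on N lifts to an automorphism of G fixing N elementwise. -/

import Mathlib

namespace Stmt12Aux

lemma cg1 {A : Type*} [CommGroup A] {a b c d a' b' c' d' : A}
    (h1 : a * b = c * d) (h2 : a' * b' = c' * d') :
    (a' / a) * (b' / b) = (c' / c) * (d' / d) := by
  rw [div_mul_div_comm, div_mul_div_comm, h1, h2]

lemma cg2 {A : Type*} [CommGroup A] {a b c d : A} (h : a / b = c / d) :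
    d * a = b * c := by
  have h2 : a * d = c * b := div_eq_div_iff_mul_eq_mul.mp h
  rw [mul_comm d a, h2, mul_comm]

variable {G : Type*} [Group G]

/-- factor set of the transversal -/
def Ff (N : Subgroup G) [N.Normal] (t : G ⧸ N → G)
    (ht : ∀ x : G ⧸ N, (QuotientGroup.mk (t x) : G ⧸ N) = x) (x y : G ⧸ N) : N :=
  ⟨(t (x * y))⁻¹ * t x * t y, by
    rw [← QuotientGroup.eq_one_iff]
    simp only [QuotientGroup.mk_mul, QuotientGroup.mk_inv, ht]
    group⟩

@[simp] lemma Ff_coe (N : Subgroup G) [N.Normal] (t : G ⧸ N → G)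
    (ht : ∀ x : G ⧸ N, (QuotientGroup.mk (t x) : G ⧸ N) = x) (x y : G ⧸ N) :
    (Ff N t ht x y : G) = (t (x * y))⁻¹ * t x * t y := rfl

/-- conjugation action -/
def σf (N : Subgroup G) [hN : N.Normal] (t : G ⧸ N → G) (z : G ⧸ N) (n : N) : N :=
  ⟨(t z)⁻¹ * n * t z, by simpa using hN.conj_mem n n.2 (t z)⁻¹⟩

@[simp] lemma σf_coe (N : Subgroup G) [N.Normal] (t : G ⧸ N → G) (z : G ⧸ N) (n : N) :
    (σf N t z n : G) = (t z)⁻¹ * n * t z := rfl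

lemma σf_mul (N : Subgroup G) [N.Normal] (t : G ⧸ N → G) (z : G ⧸ N) (a b : N) :
    σf N t z (a * b) = σf N t z a * σf N t z b := by
  apply Subtype.ext
  simp only [σf_coe, Subgroup.coe_mul]
  group

lemma σf_div (N : Subgroup G) [N.Normal] (t : G ⧸ N → G) (z : G ⧸ N) (a b : N) :
    σf N t z (a / b) = σf N t z a / σf N t z b := by
  apply Subtype.ext
  simp only [σf_coe, Subgroup.coe_div, div_eq_mul_inv, Subgroup.coe_mul, Subgroup.coe_inv]
  group

lemma Ff_cocycle (N : Subgroup G) [N.Normal] (t : G ⧸ N → G)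
    (ht : ∀ x : G ⧸ N, (QuotientGroup.mk (t x) : G ⧸ N) = x) (x y z : G ⧸ N) :
    Ff N t ht (x * y) z * σf N t z (Ff N t ht x y) =
      Ff N t ht x (y * z) * Ff N t ht y z := by
  apply Subtype.ext
  simp only [Subgroup.coe_mul, σf_coe, Ff_coe, mul_assoc x y z]
  group

lemma Ff_one_right (N : Subgroup G) [N.Normal] (t : G ⧸ N → G)
    (ht : ∀ x : G ⧸ N, (QuotientGroup.mk (t x) : G ⧸ N) = x) (ht1 : t 1 = 1) (x : G ⧸ N) :
    Ff N t ht x 1 = 1 := by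
  apply Subtype.ext
  simp only [Ff_coe, mul_one, ht1, Subgroup.coe_one]
  group

lemma Ff_one_left (N : Subgroup G) [N.Normal] (t : G ⧸ N → G)
    (ht : ∀ x : G ⧸ N, (QuotientGroup.mk (t x) : G ⧸ N) = x) (ht1 : t 1 = 1) (x : G ⧸ N) :
    Ff N t ht 1 x = 1 := by
  apply Subtype.ext
  simp only [Ff_coe, one_mul, ht1, Subgroup.coe_one]
  group

/-- the "N-part" of a group element relative to the transversal -/
def mmf (N : Subgroup G) [N.Normal] (t : G ⧸ N → G)
    (ht : ∀ x : G ⧸ N, (QuotientGroup.mk (t x) : G ⧸ N) = x) (g : G) : N :=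
  ⟨(t (QuotientGroup.mk g))⁻¹ * g, by
    rw [← QuotientGroup.eq_one_iff]
    simp only [QuotientGroup.mk_mul, QuotientGroup.mk_inv, ht]
    group⟩

@[simp] lemma mmf_coe (N : Subgroup G) [N.Normal] (t : G ⧸ N → G)
    (ht : ∀ x : G ⧸ N, (QuotientGroup.mk (t x) : G ⧸ N) = x) (g : G) :
    (mmf N t ht g : G) = (t (QuotientGroup.mk g))⁻¹ * g := rfl

/-- the candidate automorphism -/
def γf (N : Subgroup G) [N.Normal] (t : G ⧸ N → G)
    (ht : ∀ x : G ⧸ N, (QuotientGroup.mk (t x) : G ⧸ N) = x)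
    (φ : G ⧸ N ≃* G ⧸ N) (ψ : N ≃* N) (χ : G ⧸ N → N) (g : G) : G :=
  t (φ (QuotientGroup.mk g)) * (χ (QuotientGroup.mk g) : G) * (ψ (mmf N t ht g) : G)


lemma main_ext {G : Type*} [Group G] (N : Subgroup G) [hN : N.Normal]
    (hcomm : ∀ a b : N, a * b = b * a)
    (t : G ⧸ N → G) (ht : ∀ x : G ⧸ N, (QuotientGroup.mk (t x) : G ⧸ N) = x)
    (φ : G ⧸ N ≃* G ⧸ N) (ψ : N ≃* N) (χ : G ⧸ N → N)
    (hφ : ∀ (n : N) (y : G ⧸ N), (t (φ y))⁻¹ * (n : G) * t (φ y) = (t y)⁻¹ * (n : G) * t y)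
    (hψ : ∀ (n m : N) (y : G ⧸ N), (n : G) = (t y)⁻¹ * (m : G) * t y →
        (ψ n : G) = (t y)⁻¹ * (ψ m : G) * t y)
    (hE : ∀ x y : G ⧸ N,
        χ (x * y) * ψ (Ff N t ht x y) =
          Ff N t ht (φ x) (φ y) * σf N t y (χ x) * χ y) :
    ∃ γ : G ≃* G,
      (∀ (g : G) (m : N), g = t (QuotientGroup.mk g) * (m : G) →
        γ g = t (φ (QuotientGroup.mk g)) * (χ (QuotientGroup.mk g) : G) * (ψ m : G)) ∧
      (∀ g : G, (QuotientGroup.mk (γ g) : G ⧸ N) = φ (QuotientGroup.mk g)) := by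
  letI : CommGroup N := { (inferInstance : Group N) with mul_comm := hcomm }
  have hφN : ∀ (n : N) (y : G ⧸ N), σf N t (φ y) n = σf N t y n :=
    fun n y => Subtype.ext (hφ n y)
  have hψσ : ∀ (n : N) (y : G ⧸ N), ψ (σf N t y n) = σf N t y (ψ n) :=
    fun n y => Subtype.ext (hψ (σf N t y n) n y rfl)
  -- multiplicativity
  have hmul : ∀ g h : G, γf N t ht φ ψ χ (g * h) = γf N t ht φ ψ χ g * γf N t ht φ ψ χ h := by
    intro g h
    have hxy : (QuotientGroup.mk (g * h) : G ⧸ N) =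
        QuotientGroup.mk g * QuotientGroup.mk h := rfl
    have hmm : mmf N t ht (g * h) =
        Ff N t ht (QuotientGroup.mk g) (QuotientGroup.mk h) *
          σf N t (QuotientGroup.mk h) (mmf N t ht g) * mmf N t ht h := by
      apply Subtype.ext
      simp only [Subgroup.coe_mul, mmf_coe, σf_coe, Ff_coe, hxy]
      group
    have hmm' : ψ (mmf N t ht (g * h)) =
        ψ (Ff N t ht (QuotientGroup.mk g) (QuotientGroup.mk h)) *
          σf N t (QuotientGroup.mk h) (ψ (mmf N t ht g)) * ψ (mmf N t ht h) := by
      rw [hmm, map_mul, map_mul, hψσ]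
    have key : χ (QuotientGroup.mk g * QuotientGroup.mk h) *
        (ψ (Ff N t ht (QuotientGroup.mk g) (QuotientGroup.mk h)) *
          σf N t (QuotientGroup.mk h) (ψ (mmf N t ht g)) * ψ (mmf N t ht h)) =
        Ff N t ht (φ (QuotientGroup.mk g)) (φ (QuotientGroup.mk h)) *
          (σf N t (φ (QuotientGroup.mk h)) (χ (QuotientGroup.mk g)) *
            (σf N t (φ (QuotientGroup.mk h)) (ψ (mmf N t ht g)) *
              (χ (QuotientGroup.mk h) * ψ (mmf N t ht h)))) := by
      rw [hφN, hφN]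
      calc χ (QuotientGroup.mk g * QuotientGroup.mk h) *
            (ψ (Ff N t ht (QuotientGroup.mk g) (QuotientGroup.mk h)) *
              σf N t (QuotientGroup.mk h) (ψ (mmf N t ht g)) * ψ (mmf N t ht h)) =
          (χ (QuotientGroup.mk g * QuotientGroup.mk h) *
            ψ (Ff N t ht (QuotientGroup.mk g) (QuotientGroup.mk h))) *
            (σf N t (QuotientGroup.mk h) (ψ (mmf N t ht g)) * ψ (mmf N t ht h)) := by
            simp only [mul_assoc]
        _ = (Ff N t ht (φ (QuotientGroup.mk g)) (φ (QuotientGroup.mk h)) *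
              σf N t (QuotientGroup.mk h) (χ (QuotientGroup.mk g)) *
              χ (QuotientGroup.mk h)) *
            (σf N t (QuotientGroup.mk h) (ψ (mmf N t ht g)) * ψ (mmf N t ht h)) := by
            rw [hE]
        _ = _ := by
            simp only [mul_assoc]
            rw [← mul_assoc (χ (QuotientGroup.mk h)), hcomm (χ (QuotientGroup.mk h)),
              mul_assoc]
    have keyG := congrArg (Subtype.val : N → G) key
    simp only [Subgroup.coe_mul, σf_coe, Ff_coe] at keyG
    show γf N t ht φ ψ χ (g * h) = _
    simp only [γf, hmm', hxy, Subgroup.coe_mul, σf_coe]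
    simp only [mul_assoc] at keyG ⊢
    rw [keyG, map_mul]
    group
  -- mk of γf
  have hmk : ∀ g : G, (QuotientGroup.mk (γf N t ht φ ψ χ g) : G ⧸ N) =
      φ (QuotientGroup.mk g) := by
    intro g
    simp only [γf]
    rw [QuotientGroup.mk_mul, QuotientGroup.mk_mul, ht,
      (QuotientGroup.eq_one_iff _).mpr (SetLike.coe_mem _),
      (QuotientGroup.eq_one_iff _).mpr (SetLike.coe_mem _), mul_one, mul_one]
  -- injectivity
  have hinj : Function.Injective (γf N t ht φ ψ χ) := by
    intro g h heq
    have h1 : φ (QuotientGroup.mk g) = φ (QuotientGroup.mk h) := by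
      rw [← hmk, ← hmk, heq]
    have h2 : (QuotientGroup.mk g : G ⧸ N) = QuotientGroup.mk h := φ.injective h1
    simp only [γf, h2] at heq
    have h3 : (ψ (mmf N t ht g) : G) = (ψ (mmf N t ht h) : G) :=
      mul_left_cancel heq
    have h4 : mmf N t ht g = mmf N t ht h := ψ.injective (Subtype.ext h3)
    have h5 := Subtype.ext_iff.mp h4
    rw [mmf_coe, mmf_coe, h2] at h5
    exact mul_left_cancel h5
  -- surjectivity
  have hsurj : Function.Surjective (γf N t ht φ ψ χ) := by
    intro h
    set x := φ.symm (QuotientGroup.mk h) with hx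
    have hφx : φ x = QuotientGroup.mk h := φ.apply_symm_apply _
    set n : N := ψ.symm ((χ x)⁻¹ * mmf N t ht h) with hn
    refine ⟨t x * (n : G), ?_⟩
    have hmkg : (QuotientGroup.mk (t x * (n : G)) : G ⧸ N) = x := by
      rw [QuotientGroup.mk_mul, ht, (QuotientGroup.eq_one_iff _).mpr n.2, mul_one]
    have hmmg : mmf N t ht (t x * (n : G)) = n := by
      apply Subtype.ext
      rw [mmf_coe, hmkg, inv_mul_cancel_left]
    show γf N t ht φ ψ χ _ = h
    simp only [γf, hmkg, hmmg]
    simp only [γf, hmkg, hmmg, hn, MulEquiv.apply_symm_apply, hφx, Subgroup.coe_mul,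
      Subgroup.coe_inv, mmf_coe]
    group
  refine ⟨MulEquiv.ofBijective (MonoidHom.mk' (γf N t ht φ ψ χ) hmul) ⟨hinj, hsurj⟩,
    ?_, fun g => hmk g⟩
  intro g m hm
  have h6 : t (QuotientGroup.mk g) * (m : G) =
      t (QuotientGroup.mk g) * (mmf N t ht g : G) := by
    rw [mmf_coe, mul_inv_cancel_left, ← hm]
  have h7 : m = mmf N t ht g := Subtype.ext (mul_left_cancel h6)
  rw [h7]
  rfl

end Stmt12Aux

open Stmt12Aux

/-- If H²(G/N, N) = 1 (every normalized 2-cocycle for the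
conjugation action is a coboundary), then every θ ∈ C₁ extends to an automorphism
of G inducing the identity on G/N, and every φ ∈ C₂ lifts to an automorphism of G
fixing N elementwise. -/
theorem stmt_12 {G : Type*} [Group G] (N : Subgroup G) [N.Normal]
    (hcomm : ∀ a b : N, a * b = b * a)
    (t : G ⧸ N → G) (ht : ∀ x : G ⧸ N, (QuotientGroup.mk (t x) : G ⧸ N) = x)
    (ht1 : t 1 = 1)
    (hH2 : ∀ k : G ⧸ N → G ⧸ N → N,
      (∀ x : G ⧸ N, k x 1 = 1 ∧ k 1 x = 1) →
      (∀ x y z : G ⧸ N,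
        (k (x * y) z : G) * ((t z)⁻¹ * (k x y : G) * t z) =
          (k x (y * z) : G) * (k y z : G)) →
      ∃ χ : G ⧸ N → N, χ 1 = 1 ∧
        ∀ x y : G ⧸ N,
          (k x y : G) =
            ((t y)⁻¹ * (χ x : G) * t y) * (χ y : G) * ((χ (x * y) : G))⁻¹) :
    (∀ θ : N ≃* N,
      (∀ (n m : N) (x : G ⧸ N),
        (n : G) = (t x)⁻¹ * (m : G) * t x →
          (θ n : G) = (t x)⁻¹ * (θ m : G) * t x) →
      ∃ γ : G ≃* G,
        (∀ n : N, γ n = (θ n : G)) ∧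
        (∀ g : G, (QuotientGroup.mk (γ g) : G ⧸ N) = QuotientGroup.mk g)) ∧
    (∀ φ : G ⧸ N ≃* G ⧸ N,
      (∀ (n : N) (x : G ⧸ N),
        (t (φ x))⁻¹ * (n : G) * t (φ x) = (t x)⁻¹ * (n : G) * t x) →
      ∃ γ : G ≃* G,
        (∀ n ∈ N, γ n = n) ∧
        (∀ g : G, (QuotientGroup.mk (γ g) : G ⧸ N) = φ (QuotientGroup.mk g))) := by
  letI : CommGroup N := { (inferInstance : Group N) with mul_comm := hcomm }
  constructor
  · -- Part 1: θ ∈ C₁ extends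
    intro θ hθ
    set k : G ⧸ N → G ⧸ N → N :=
      fun x y => θ (Ff N t ht x y) / Ff N t ht x y with hk_def
    have hnorm : ∀ x : G ⧸ N, k x 1 = 1 ∧ k 1 x = 1 := by
      intro x
      constructor <;>
        simp [hk_def, Ff_one_right N t ht ht1, Ff_one_left N t ht ht1]
    have hθσ : ∀ (n : N) (z : G ⧸ N), θ (σf N t z n) = σf N t z (θ n) :=
      fun n z => Subtype.ext (hθ (σf N t z n) n z rfl)
    have hcoc : ∀ x y z : G ⧸ N,
        (k (x * y) z : G) * ((t z)⁻¹ * (k x y : G) * t z) =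
          (k x (y * z) : G) * (k y z : G) := by
      intro x y z
      have base := Ff_cocycle N t ht x y z
      have baseθ : θ (Ff N t ht (x * y) z) * σf N t z (θ (Ff N t ht x y)) =
          θ (Ff N t ht x (y * z)) * θ (Ff N t ht y z) := by
        rw [← hθσ, ← map_mul, ← map_mul, base]
      have hN2 : k (x * y) z * σf N t z (k x y) = k x (y * z) * k y z := by
        simp only [hk_def]
        rw [σf_div]
        exact cg1 base baseθ
      have := congrArg (Subtype.val : N → G) hN2
      simpa only [Subgroup.coe_mul, σf_coe] using this
    obtain ⟨χ, hχ1, hk⟩ := hH2 k hnorm hcoc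
    have hkN : ∀ x y : G ⧸ N, k x y = σf N t y (χ x) * χ y / χ (x * y) := by
      intro x y
      apply Subtype.ext
      simp only [div_eq_mul_inv, Subgroup.coe_mul, Subgroup.coe_inv, σf_coe]
      exact hk x y
    have hE1 : ∀ x y : G ⧸ N,
        χ (x * y) * θ (Ff N t ht x y) =
          Ff N t ht x y * σf N t y (χ x) * χ y := by
      intro x y
      have h := hkN x y
      rw [hk_def] at h
      rw [mul_assoc]
      exact cg2 h
    obtain ⟨γ, hform, hmkγ⟩ :=
      main_ext N hcomm t ht (MulEquiv.refl (G ⧸ N)) θ χ (fun n y => rfl) hθ hE1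
    refine ⟨γ, ?_, ?_⟩
    · intro n
      have h1 : (QuotientGroup.mk (n : G) : G ⧸ N) = 1 :=
        (QuotientGroup.eq_one_iff _).mpr n.2
      have h2 : (n : G) = t (QuotientGroup.mk (n : G)) * (n : G) := by
        rw [h1, ht1, one_mul]
      rw [hform (n : G) n h2, h1]
      simp [ht1, hχ1]
    · intro g
      rw [hmkγ g]
      rfl
  · -- Part 2: φ ∈ C₂ lifts
    intro φ hφ2
    have hφN : ∀ (n : N) (y : G ⧸ N), σf N t (φ y) n = σf N t y n :=
      fun n y => Subtype.ext (hφ2 n y)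
    set k : G ⧸ N → G ⧸ N → N :=
      fun x y => Ff N t ht x y / Ff N t ht (φ x) (φ y) with hk_def
    have hnorm : ∀ x : G ⧸ N, k x 1 = 1 ∧ k 1 x = 1 := by
      intro x
      constructor <;>
        simp [hk_def, map_one φ, Ff_one_right N t ht ht1, Ff_one_left N t ht ht1]
    have hcoc : ∀ x y z : G ⧸ N,
        (k (x * y) z : G) * ((t z)⁻¹ * (k x y : G) * t z) =
          (k x (y * z) : G) * (k y z : G) := by
      intro x y z
      have base := Ff_cocycle N t ht x y z
      have baseφ := Ff_cocycle N t ht (φ x) (φ y) (φ z)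
      rw [← map_mul φ, ← map_mul φ, hφN] at baseφ
      have hN2 : k (x * y) z * σf N t z (k x y) = k x (y * z) * k y z := by
        simp only [hk_def]
        rw [σf_div]
        exact cg1 baseφ base
      have := congrArg (Subtype.val : N → G) hN2
      simpa only [Subgroup.coe_mul, σf_coe] using this
    obtain ⟨χ, hχ1, hk⟩ := hH2 k hnorm hcoc
    have hkN : ∀ x y : G ⧸ N, k x y = σf N t y (χ x) * χ y / χ (x * y) := by
      intro x y
      apply Subtype.ext
      simp only [div_eq_mul_inv, Subgroup.coe_mul, Subgroup.coe_inv, σf_coe]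
      exact hk x y
    have hE2 : ∀ x y : G ⧸ N,
        χ (x * y) * Ff N t ht x y =
          Ff N t ht (φ x) (φ y) * σf N t y (χ x) * χ y := by
      intro x y
      have h := hkN x y
      rw [hk_def] at h
      rw [mul_assoc]
      exact cg2 h
    obtain ⟨γ, hform, hmkγ⟩ :=
      main_ext N hcomm t ht φ (MulEquiv.refl N) χ hφ2 (fun n m y h => h) hE2
    refine ⟨γ, ?_, fun g => hmkγ g⟩
    intro n hn
    have h1 : (QuotientGroup.mk n : G ⧸ N) = 1 := (QuotientGroup.eq_one_iff _).mpr hn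
    have h2 : n = t (QuotientGroup.mk n) * ((⟨n, hn⟩ : N) : G) := by
      rw [h1, ht1, one_mul]
    rw [hform n ⟨n, hn⟩ h2, h1, map_one φ, ht1, hχ1]
    simp
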